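/- arXiv:2206.09397 — 2 statements merged into one kernel-verified Lean document; each statement's English description precedes it below -/
import Mathlib

section
/- Let V satisfy the decrease condition with max, i.e. V(f(x,ν), f̂(x̂,ν)) ≤ max{γ V(x,x̂), ρ}. Then limsup over k of V(x(k), x̂(k)) along any synchronized trajectory pair is at most ρ; moreover if V(x(0), x̂(0)) > ρ then V(x(k), x̂(k)) ≤ ρ for all k ≥ ⌈log(ρ / V(x(0), x̂(0))) / log γ⌉. -/
open Filter

/-- The ABF decrease condition implies limsup_k V(x(k),xh(k)) ≤ ρ, and if
V(x(0),xh(0)) > ρ then V(x(k),xh(k)) ≤ ρ for all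
k ≥ ⌈log(ρ / V(x(0),xh(0))) / log γ⌉. -/
theorem abf_limsup_and_entry_time
    {X Xhat U : Type*}
    (f : X → U → X) (fhat : Xhat → U → Xhat) (V : X → Xhat → ℝ)
    (γ ρ : ℝ) (hγ : 0 < γ) (hγ1 : γ < 1) (hρ : 0 < ρ)
    (hV : ∀ (x : X) (xh : Xhat), 0 ≤ V x xh)
    (hdec : ∀ (x : X) (xh : Xhat) (ν : U),
      V (f x ν) (fhat xh ν) ≤ max (γ * V x xh) ρ)
    (x : ℕ → X) (xh : ℕ → Xhat) (ν : ℕ → U)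
    (hx : ∀ k, x (k + 1) = f (x k) (ν k))
    (hxh : ∀ k, xh (k + 1) = fhat (xh k) (ν k))
    (h0pos : 0 < V (x 0) (xh 0)) :
    limsup (fun k => V (x k) (xh k)) atTop ≤ ρ ∧
    (ρ < V (x 0) (xh 0) →
      ∀ k : ℕ, (⌈Real.log (ρ / V (x 0) (xh 0)) / Real.log γ⌉ : ℤ) ≤ (k : ℤ) →
        V (x k) (xh k) ≤ ρ) := by
  set V0 := V (x 0) (xh 0) with hV0
  have key : ∀ k : ℕ, V (x k) (xh k) ≤ max (γ ^ k * V0) ρ := by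
    intro k
    induction k with
    | zero => simp; exact Or.inl le_rfl
    | succ n ih =>
      rw [hx n, hxh n]
      calc V (f (x n) (ν n)) (fhat (xh n) (ν n)) ≤ max (γ * V (x n) (xh n)) ρ :=
            hdec _ _ _
        _ ≤ max (γ * max (γ ^ n * V0) ρ) ρ := by
            gcongr
        _ ≤ max (γ ^ (n + 1) * V0) ρ := by
            rw [mul_max_of_nonneg _ _ hγ.le]
            rw [max_le_iff]
            constructor
            · rw [max_le_iff]
              constructor
              · apply le_max_of_le_left; rw [pow_succ]; ring_nf; rfl
              · exact le_max_of_le_right (by nlinarith)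
            · exact le_max_right _ _
  have hγk : Tendsto (fun k : ℕ => γ ^ k * V0) atTop (nhds 0) := by
    simpa using (tendsto_pow_atTop_nhds_zero_of_lt_one hγ.le hγ1).mul_const V0
  constructor
  · have hbdd : IsBoundedUnder (· ≥ ·) atTop (fun k => V (x k) (xh k)) :=
      isBoundedUnder_of ⟨0, fun k => hV _ _⟩
    have hev : ∀ᶠ k : ℕ in atTop, V (x k) (xh k) ≤ ρ := by
      filter_upwards [hγk.eventually_le_const hρ] with k h
      exact (key k).trans (max_le h le_rfl)
    exact limsup_le_of_le hbdd.isCoboundedUnder_le hev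
  · intro hρV k hk
    refine (key k).trans (max_le ?_ le_rfl)
    -- need γ^k * V0 ≤ ρ
    have hlogγ : Real.log γ < 0 := Real.log_neg hγ hγ1
    have hdiv : ρ / V0 < 1 := (div_lt_one h0pos).2 hρV
    have hdivpos : 0 < ρ / V0 := div_pos hρ h0pos
    have hL : Real.log (ρ / V0) / Real.log γ ≤ (k : ℝ) := by
      have := Int.ceil_le.1 hk
      exact_mod_cast this
    have : (k : ℝ) * Real.log γ ≤ Real.log (ρ / V0) := by
      rw [div_le_iff_of_neg hlogγ] at hL
      linarith
    have hpow : γ ^ k ≤ ρ / V0 := by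
      have h1 : Real.log (γ ^ k) ≤ Real.log (ρ / V0) := by
        rw [Real.log_pow]; exact_mod_cast this
      have := Real.exp_le_exp.2 h1
      rwa [Real.exp_log (pow_pos hγ k), Real.exp_log hdivpos] at this
    calc γ ^ k * V0 ≤ (ρ / V0) * V0 := by nlinarith
      _ = ρ := div_mul_cancel₀ _ h0pos.ne'
end

section
/- Suppose f(·, ν) is L_f-Lipschitz for every ν ∈ U, Q satisfies ‖Q(y) − y‖ ≤ δ, f̂(x̂, ν) = Q(f(x̂, ν)), P is symmetric positive definite with λ_max(P) L_f² ≤ γ̃ λ_min(P) for some γ̃ ∈ (0,1). Then V(x, x̂) = (x − x̂)ᵀ P (x − x̂) satisfies, for all x, x̂, ν: V(f(x,ν), f̂(x̂,ν)) ≤ (1+c) γ̃ V(x, x̂) + (1 + 1/c) λ_max(P) δ² for any c > 0. -/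
open Matrix in
lemma rayleigh_aux {n : ℕ} (P : Matrix (Fin n) (Fin n) ℝ)
    (hP : P.IsHermitian) (v : Fin n → ℝ) (hn : 0 < n) :
    (⨅ i, hP.eigenvalues i) * dotProduct v v ≤ dotProduct v (P.mulVec v) ∧
      dotProduct v (P.mulVec v) ≤ (⨆ i, hP.eigenvalues i) * dotProduct v v := by
  haveI : Nonempty (Fin n) := ⟨⟨0, hn⟩⟩
  set Um : Matrix (Fin n) (Fin n) ℝ := (hP.eigenvectorUnitary : Matrix (Fin n) (Fin n) ℝ)
  set w : Fin n → ℝ := star Um *ᵥ v with hw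
  have hUU : Um * star Um = 1 := (Matrix.mem_unitaryGroup_iff).mp hP.eigenvectorUnitary.2
  have h1 : dotProduct v (P.mulVec v) = ∑ i, hP.eigenvalues i * (w i)^2 := by
    conv_lhs => rw [hP.spectral_theorem, Unitary.conjStarAlgAut_apply]
    rw [← mulVec_mulVec, ← mulVec_mulVec, dotProduct_mulVec, ← mulVec_transpose]
    have hst : Umᵀ = star Um := by
      simp [Um, star, Matrix.conjTranspose, Matrix.transpose]
    rw [hst, ← hw]
    simp [mulVec_diagonal, dotProduct, Function.comp, mul_comm, sq, mul_assoc,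
      mul_left_comm]
  have h2 : dotProduct v v = ∑ i, (w i)^2 := by
    have : dotProduct w w = dotProduct v v := by
      rw [hw, dotProduct_mulVec, ← mulVec_transpose]
      have hst : (star Um)ᵀ = Umᵀᵀ := by
        simp [star, Matrix.conjTranspose]
      rw [hst, Matrix.transpose_transpose, mulVec_mulVec, hUU, one_mulVec]
    rw [← this]
    simp [dotProduct, sq]
  have hbddA : BddAbove (Set.range hP.eigenvalues) := Set.Finite.bddAbove (Set.finite_range _)
  have hbddB : BddBelow (Set.range hP.eigenvalues) := Set.Finite.bddBelow (Set.finite_range _)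
  constructor
  · rw [h1, h2, Finset.mul_sum]
    exact Finset.sum_le_sum fun i _ =>
      mul_le_mul_of_nonneg_right (ciInf_le hbddB i) (sq_nonneg _)
  · rw [h1, h2, Finset.mul_sum]
    exact Finset.sum_le_sum fun i _ =>
      mul_le_mul_of_nonneg_right (le_ciSup hbddA i) (sq_nonneg _)

lemma norm_sq_eq_dot {n : ℕ} (u : EuclideanSpace ℝ (Fin n)) :
    ‖u‖ ^ 2 = dotProduct (WithLp.ofLp u) (WithLp.ofLp u) := by
  rw [EuclideanSpace.norm_eq, Real.sq_sqrt (by positivity)]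
  simp [dotProduct, sq]

set_option maxHeartbeats 1000000 in
/-- If f(·,ν) is L_f-Lipschitz, Q is a δ-quantizer, f̂(x̂,ν) = Q(f(x̂,ν)), and
λ_max(P) L_f² ≤ γ̃ λ_min(P), then the quadratic form V(x,x̂) = (x−x̂)ᵀP(x−x̂)
satisfies V(f(x,ν), f̂(x̂,ν)) ≤ (1+c) γ̃ V(x,x̂) + (1+1/c) λ_max(P) δ² for any
c > 0. -/
theorem quadratic_abf_decrease
    {n : ℕ} {U : Type*} (hn : 0 < n)
    (f : EuclideanSpace ℝ (Fin n) → U → EuclideanSpace ℝ (Fin n))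
    (Q : EuclideanSpace ℝ (Fin n) → EuclideanSpace ℝ (Fin n))
    (Lf δ γ' : ℝ) (hLf : 0 ≤ Lf) (hδ : 0 ≤ δ) (hγ'0 : 0 < γ') (hγ'1 : γ' < 1)
    (hlip : ∀ (ν : U), ∀ x y : EuclideanSpace ℝ (Fin n),
      ‖f x ν - f y ν‖ ≤ Lf * ‖x - y‖)
    (hQ : ∀ y : EuclideanSpace ℝ (Fin n), ‖Q y - y‖ ≤ δ)
    (P : Matrix (Fin n) (Fin n) ℝ) (hP : P.IsHermitian) (hPpos : P.PosDef)
    (heig : (⨆ i, hP.eigenvalues i) * Lf ^ 2 ≤ γ' * ⨅ i, hP.eigenvalues i) :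
    ∀ c : ℝ, 0 < c → ∀ (x xh : EuclideanSpace ℝ (Fin n)) (ν : U),
      dotProduct (WithLp.ofLp (f x ν - Q (f xh ν)))
          (P.mulVec (WithLp.ofLp (f x ν - Q (f xh ν)))) ≤
        (1 + c) * γ' * dotProduct (WithLp.ofLp (x - xh)) (P.mulVec (WithLp.ofLp (x - xh))) +
        (1 + 1 / c) * (⨆ i, hP.eigenvalues i) * δ ^ 2 := by
  intro c hc x xh ν
  haveI : Nonempty (Fin n) := ⟨⟨0, hn⟩⟩
  set S := ⨆ i, hP.eigenvalues i with hS
  set I := ⨅ i, hP.eigenvalues i with hI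
  have hSpos : 0 < S := by
    have h0 : 0 < hP.eigenvalues ⟨0, hn⟩ := hPpos.eigenvalues_pos ⟨0, hn⟩
    exact lt_of_lt_of_le h0 (le_ciSup (Set.Finite.bddAbove (Set.finite_range _)) _)
  set v : EuclideanSpace ℝ (Fin n) := f x ν - Q (f xh ν) with hv
  set a : EuclideanSpace ℝ (Fin n) := f x ν - f xh ν with ha
  set b : EuclideanSpace ℝ (Fin n) := f xh ν - Q (f xh ν) with hb
  have hvab : v = a + b := by rw [hv, ha, hb]; abel
  have hna : ‖a‖ ≤ Lf * ‖x - xh‖ := hlip ν x xh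
  have hnb : ‖b‖ ≤ δ := by
    rw [hb, ← norm_neg]
    simpa using hQ (f xh ν)
  have hyoung : ‖v‖ ^ 2 ≤ (1 + c) * ‖a‖ ^ 2 + (1 + 1 / c) * ‖b‖ ^ 2 := by
    have h1 : ‖v‖ ≤ ‖a‖ + ‖b‖ := hvab ▸ norm_add_le a b
    have h2 : 0 ≤ ‖v‖ := norm_nonneg _
    have h3 : 0 ≤ ‖a‖ := norm_nonneg _
    have h4 : 0 ≤ ‖b‖ := norm_nonneg _
    have key : 2 * ‖a‖ * ‖b‖ ≤ c * ‖a‖^2 + (1/c) * ‖b‖^2 := by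
      have hd : 0 ≤ (c * ‖a‖ - ‖b‖)^2 / c := div_nonneg (sq_nonneg _) hc.le
      have hexp : (c * ‖a‖ - ‖b‖)^2 / c
          = c * ‖a‖^2 + (1/c) * ‖b‖^2 - 2 * ‖a‖ * ‖b‖ := by
        field_simp
        ring
      rw [hexp] at hd
      linarith
    nlinarith [mul_le_mul h1 h1 h2 (by linarith)]
  obtain ⟨_, hup⟩ := rayleigh_aux P hP (WithLp.ofLp v) hn
  obtain ⟨hlow, _⟩ := rayleigh_aux P hP (WithLp.ofLp (x - xh)) hn
  rw [← norm_sq_eq_dot] at hup hlow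
  have hna2 : ‖a‖ ^ 2 ≤ Lf ^ 2 * ‖x - xh‖ ^ 2 := by
    nlinarith [norm_nonneg a, norm_nonneg (x - xh)]
  have hnb2 : ‖b‖ ^ 2 ≤ δ ^ 2 := by nlinarith [norm_nonneg b]
  have hc1 : (0:ℝ) < 1 + c := by linarith
  have hc2 : (0:ℝ) < 1 + 1 / c := by positivity
  have step : dotProduct (WithLp.ofLp v) (P.mulVec (WithLp.ofLp v)) ≤
      (1 + c) * (S * Lf ^ 2) * ‖x - xh‖ ^ 2 + (1 + 1/c) * S * δ ^ 2 := by
    have k1 := mul_le_mul_of_nonneg_left hyoung hSpos.le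
    have k2 := mul_le_mul_of_nonneg_left hna2 (mul_nonneg hc1.le hSpos.le)
    have k3 := mul_le_mul_of_nonneg_left hnb2 (mul_nonneg hc2.le hSpos.le)
    nlinarith [k1, k2, k3, hup]
  have h5 : (1 + c) * (S * Lf ^ 2) * ‖x - xh‖ ^ 2 ≤ (1 + c) * (γ' * I) * ‖x - xh‖ ^ 2 :=
    mul_le_mul_of_nonneg_right (mul_le_mul_of_nonneg_left heig hc1.le) (sq_nonneg ‖x - xh‖)
  have h6 := mul_le_mul_of_nonneg_left hlow (mul_nonneg hc1.le hγ'0.le)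
  nlinarith [step, h5, h6]
end
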